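/- Let n ≥ 1, d ≥ 1, W_0,...,W_n ∈ ℝ^d, ω_0,...,ω_n > 0, r ≥ 1, and regard each Q^n_i and h^n_i as a function of t on (0,1). Then for every i with 1 ≤ i ≤ n and every t ∈ (0,1), (Q^n_i)^{(r)}(t) = (h^n_i)^{(r)}(t)·(W_i - Q^n_{i-1}(t)) + (Q^n_{i-1})^{(r)}(t) - Σ_{j=0}^{r-1} C(r,j)·(h^n_i)^{(j)}(t)·(Q^n_{i-1})^{(r-j)}(t), where (Q^n_0)^{(k)} ≡ 0 for all k ≥ 1; consequently R_n^{(r)}(t) = (Q^n_n)^{(r)}(t). -/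

import Mathlib

open Finset

/-- The `k`-th Bernstein polynomial of degree `n`. -/
noncomputable def bern (n k : ℕ) (t : ℝ) : ℝ :=
  (n.choose k : ℝ) * t ^ k * (1 - t) ^ (n - k)

/-- The rational Bézier curve of degree `n` with control points `W` and weights `ω`. -/
noncomputable def RB (n d : ℕ) (ω : ℕ → ℝ) (W : ℕ → Fin d → ℝ) (t : ℝ) : Fin d → ℝ :=
  (∑ k ∈ range (n + 1), ω k * bern n k t)⁻¹ •
    ∑ k ∈ range (n + 1), (ω k * bern n k t) • W k

/-- The point `Q^n_i(t)`. -/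
noncomputable def Qpt (n d : ℕ) (ω : ℕ → ℝ) (W : ℕ → Fin d → ℝ) (i : ℕ) (t : ℝ) : Fin d → ℝ :=
  (∑ k ∈ range (i + 1), ω k * bern n k t)⁻¹ •
    ∑ k ∈ range (i + 1), (ω k * bern n k t) • W k

/-- The quantity `h^n_i(t)`, with `h^n_0(t) := 1`. -/
noncomputable def hfun (n : ℕ) (ω : ℕ → ℝ) (i : ℕ) (t : ℝ) : ℝ :=
  if i = 0 then 1
  else ω i * bern n i t / ∑ k ∈ range (i + 1), ω k * bern n k t

section Helpers

variable {E : Type*} [NormedAddCommGroup E] [NormedSpace ℝ E]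

lemma iteratedDeriv_zero_fun (k : ℕ) : iteratedDeriv k (fun _ : ℝ => (0:E)) = 0 := by
  induction k with
  | zero => ext; simp
  | succ k ih => rw [iteratedDeriv_succ, ih]; ext x; simp [Pi.zero_def, deriv_const']

lemma contDiffOn_iteratedDeriv_aux {s : Set ℝ} (hs : IsOpen s) {f : ℝ → E}
    (hf : ContDiffOn ℝ (⊤ : ℕ∞) f s) (j : ℕ) : ContDiffOn ℝ (⊤ : ℕ∞) (iteratedDeriv j f) s := by
  induction j generalizing f with
  | zero => simpa [iteratedDeriv_zero] using hf
  | succ j ih =>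
    rw [iteratedDeriv_succ']
    exact ih (hf.deriv_of_isOpen hs (by norm_num))

lemma diffAt_iteratedDeriv {s : Set ℝ} (hs : IsOpen s) {f : ℝ → E}
    (hf : ContDiffOn ℝ (⊤ : ℕ∞) f s) (j : ℕ) {t : ℝ} (ht : t ∈ s) :
    DifferentiableAt ℝ (iteratedDeriv j f) t :=
  ((contDiffOn_iteratedDeriv_aux hs hf j).differentiableOn
    (by simp)).differentiableAt (hs.mem_nhds ht)

lemma pascal_sum (F : ℕ → E) (r : ℕ) :
    ∑ j ∈ range (r+2), ((r+1).choose j : ℝ) • F j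
      = ∑ j ∈ range (r+1), (r.choose j : ℝ) • F (j+1)
        + ∑ j ∈ range (r+1), (r.choose j : ℝ) • F j := by
  rw [Finset.sum_range_succ' (fun j => ((r+1).choose j : ℝ) • F j)]
  have h1 : ∀ j, (((r+1).choose (j+1) : ℕ) : ℝ) • F (j+1)
      = (r.choose j : ℝ) • F (j+1) + (r.choose (j+1) : ℝ) • F (j+1) := by
    intro j
    rw [Nat.choose_succ_succ', Nat.cast_add, add_smul]
  simp only [h1, Finset.sum_add_distrib]
  have h2 : ∑ j ∈ range (r+1), (r.choose (j+1) : ℝ) • F (j+1) + ((r+1).choose 0 : ℝ) • F 0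
      = ∑ j ∈ range (r+1), (r.choose j : ℝ) • F j := by
    rw [Finset.sum_range_succ' (fun j => (r.choose j : ℝ) • F j)]
    simp only [Nat.choose_zero_right, Nat.cast_one, one_smul, add_left_inj]
    rw [Finset.sum_range_succ]
    simp
  rw [add_assoc, h2]

lemma leibniz_smul {s : Set ℝ} (hs : IsOpen s) {h : ℝ → ℝ} {f : ℝ → E}
    (hh : ContDiffOn ℝ (⊤ : ℕ∞) h s) (hf : ContDiffOn ℝ (⊤ : ℕ∞) f s) (r : ℕ) :
    ∀ t ∈ s, iteratedDeriv r (fun x => h x • f x) t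
      = ∑ j ∈ range (r+1), (r.choose j : ℝ) • (iteratedDeriv j h t • iteratedDeriv (r-j) f t) := by
  induction r with
  | zero => intro t ht; simp
  | succ r ih =>
    intro t ht
    have hev : iteratedDeriv r (fun x => h x • f x) =ᶠ[nhds t]
        (fun x => ∑ j ∈ range (r+1), (r.choose j : ℝ) •
          (iteratedDeriv j h x • iteratedDeriv (r-j) f x)) :=
      Filter.eventuallyEq_of_mem (hs.mem_nhds ht) ih
    rw [iteratedDeriv_succ, hev.deriv_eq]
    have hdh : ∀ j, DifferentiableAt ℝ (iteratedDeriv j h) t :=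
      fun j => diffAt_iteratedDeriv hs hh j ht
    have hdf : ∀ j, DifferentiableAt ℝ (iteratedDeriv j f) t :=
      fun j => diffAt_iteratedDeriv hs hf j ht
    rw [deriv_fun_sum (fun j _ => (show DifferentiableAt ℝ (fun x => (r.choose j : ℝ) • (iteratedDeriv j h x • iteratedDeriv (r-j) f x)) t from ((hdh j).smul (hdf (r-j))).const_smul ((r.choose j : ℝ))))]
    have hterm : ∀ j ∈ range (r+1),
        deriv (fun x => (r.choose j : ℝ) • (iteratedDeriv j h x • iteratedDeriv (r-j) f x)) t
          = (r.choose j : ℝ) • (iteratedDeriv (j+1) h t • iteratedDeriv ((r+1)-(j+1)) f t)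
            + (r.choose j : ℝ) • (iteratedDeriv j h t • iteratedDeriv ((r+1)-j) f t) := by
      intro j hj
      rw [deriv_fun_const_smul _ (show DifferentiableAt ℝ (fun x => iteratedDeriv j h x • iteratedDeriv (r-j) f x) t from (hdh j).smul (hdf (r-j))), deriv_fun_smul (hdh j) (hdf (r-j))]
      rw [Nat.succ_sub_succ, ← iteratedDeriv_succ, ← iteratedDeriv_succ,
        Nat.succ_sub (Nat.lt_succ_iff.mp (mem_range.mp hj))]
      simp only [Nat.succ_eq_add_one, smul_add]
      abel
    rw [Finset.sum_congr rfl hterm, Finset.sum_add_distrib]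
    have := pascal_sum (fun j => iteratedDeriv j h t • iteratedDeriv ((r+1)-j) f t) r
    rw [show r + 1 + 1 = r + 2 from rfl, this]

lemma iteratedDeriv_add_on {s : Set ℝ} (hs : IsOpen s) {f g : ℝ → E}
    (hf : ContDiffOn ℝ (⊤ : ℕ∞) f s) (hg : ContDiffOn ℝ (⊤ : ℕ∞) g s) (r : ℕ) :
    ∀ t ∈ s, iteratedDeriv r (fun x => f x + g x) t
      = iteratedDeriv r f t + iteratedDeriv r g t := by
  induction r with
  | zero => intro t ht; simp
  | succ r ih =>
    intro t ht
    have hev : iteratedDeriv r (fun x => f x + g x) =ᶠ[nhds t]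
        (fun x => iteratedDeriv r f x + iteratedDeriv r g x) :=
      Filter.eventuallyEq_of_mem (hs.mem_nhds ht) ih
    rw [iteratedDeriv_succ, hev.deriv_eq,
      deriv_fun_add (diffAt_iteratedDeriv hs hf r ht) (diffAt_iteratedDeriv hs hg r ht),
      ← iteratedDeriv_succ, ← iteratedDeriv_succ]

lemma iteratedDeriv_const_sub' {f : ℝ → E} (c : E) {j : ℕ} (hj : 1 ≤ j) (t : ℝ) :
    iteratedDeriv j (fun x => c - f x) t = -iteratedDeriv j f t := by
  obtain ⟨j, rfl⟩ := Nat.exists_eq_add_of_le hj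
  rw [add_comm, iteratedDeriv_succ', iteratedDeriv_succ']
  have h1 : (deriv fun x => c - f x) = fun x => -(deriv f x) := by
    funext x; exact deriv_const_sub c
  rw [h1, iteratedDeriv_fun_neg]

end Helpers

section Bezier

lemma contDiff_bern (n k : ℕ) : ContDiff ℝ (⊤ : ℕ∞) (bern n k) := by
  unfold bern
  exact ((contDiff_const.mul (contDiff_id.pow k)).mul
    ((contDiff_const.sub contDiff_id).pow (n-k)))

lemma contDiff_D (n i : ℕ) (ω : ℕ → ℝ) :
    ContDiff ℝ (⊤ : ℕ∞) (fun t => ∑ k ∈ range (i+1), ω k * bern n k t) :=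
  ContDiff.sum fun k _ => contDiff_const.mul (contDiff_bern n k)

lemma contDiff_N (n i d : ℕ) (ω : ℕ → ℝ) (W : ℕ → Fin d → ℝ) :
    ContDiff ℝ (⊤ : ℕ∞) (fun t => ∑ k ∈ range (i+1), (ω k * bern n k t) • W k) :=
  ContDiff.sum fun k _ => (contDiff_const.mul (contDiff_bern n k)).smul contDiff_const

lemma bern_nonneg {n k : ℕ} {t : ℝ} (ht0 : 0 ≤ t) (ht1 : t ≤ 1) : 0 ≤ bern n k t :=
  mul_nonneg (mul_nonneg (Nat.cast_nonneg _) (pow_nonneg ht0 k))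
    (pow_nonneg (by linarith) (n - k))

lemma D_pos {n i : ℕ} {ω : ℕ → ℝ} (hi : i ≤ n) (hω : ∀ k ≤ n, 0 < ω k) {t : ℝ}
    (ht0 : 0 < t) (ht1 : t < 1) :
    0 < ∑ k ∈ range (i+1), ω k * bern n k t := by
  have h0 : 0 < ω 0 * bern n 0 t := by
    have : bern n 0 t = (1 - t) ^ n := by simp [bern]
    rw [this]
    exact mul_pos (hω 0 (Nat.zero_le _)) (pow_pos (by linarith) n)
  refine Finset.sum_pos' (fun k hk => ?_) ⟨0, by simp, h0⟩
  have hk' : k ≤ n := le_trans (Nat.lt_succ_iff.mp (mem_range.mp hk)) hi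
  exact mul_nonneg (hω k hk').le (bern_nonneg ht0.le ht1.le)

lemma contDiffOn_Qpt (n i d : ℕ) (hi : i ≤ n) (ω : ℕ → ℝ) (hω : ∀ k ≤ n, 0 < ω k)
    (W : ℕ → Fin d → ℝ) :
    ContDiffOn ℝ (⊤ : ℕ∞) (Qpt n d ω W i) (Set.Ioo 0 1) := by
  unfold Qpt
  refine ContDiffOn.smul (ContDiffOn.inv ((contDiff_D n i ω).contDiffOn) ?_)
    ((contDiff_N n i d ω W).contDiffOn)
  intro t ht
  exact (D_pos hi hω ht.1 ht.2).ne'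

lemma contDiffOn_hfun (n i : ℕ) (hi : i ≤ n) (ω : ℕ → ℝ) (hω : ∀ k ≤ n, 0 < ω k) :
    ContDiffOn ℝ (⊤ : ℕ∞) (hfun n ω i) (Set.Ioo 0 1) := by
  unfold hfun
  rcases eq_or_ne i 0 with h | h
  · simp [h]; exact contDiffOn_const
  · simp only [h, if_false]
    exact ContDiffOn.div ((contDiff_const.mul (contDiff_bern n i)).contDiffOn)
      ((contDiff_D n i ω).contDiffOn) (fun t ht => (D_pos hi hω ht.1 ht.2).ne')

lemma Qpt_rec (n d : ℕ) (ω : ℕ → ℝ) (hω : ∀ k ≤ n, 0 < ω k) (W : ℕ → Fin d → ℝ)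
    (m : ℕ) (hm : m + 1 ≤ n) {t : ℝ} (ht0 : 0 < t) (ht1 : t < 1) :
    Qpt n d ω W (m+1) t = Qpt n d ω W m t + hfun n ω (m+1) t • (W (m+1) - Qpt n d ω W m t) := by
  have hD : 0 < ∑ k ∈ range (m+1), ω k * bern n k t :=
    D_pos (le_trans (Nat.le_succ m) hm) hω ht0 ht1
  unfold Qpt hfun
  simp only [Nat.succ_ne_zero, if_false]
  rw [Finset.sum_range_succ (f := fun k => (ω k * bern n k t) • W k),
      Finset.sum_range_succ (f := fun k => ω k * bern n k t)]
  funext x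
  set D := ∑ k ∈ range (m+1), ω k * bern n k t with hDdef
  set Nv := ∑ k ∈ range (m+1), (ω k * bern n k t) • W k with hNdef
  set b := ω (m+1) * bern n (m+1) t with hbdef
  have hb : 0 ≤ b := mul_nonneg (hω _ hm).le (bern_nonneg ht0.le ht1.le)
  have hDb : 0 < D + b := by linarith
  simp only [Pi.smul_apply, Pi.add_apply, Pi.sub_apply, smul_eq_mul]
  field_simp
  ring

lemma Qpt0_deriv (n d : ℕ) (hn : 1 ≤ n) (ω : ℕ → ℝ) (hω0 : ω 0 ≠ 0) (W : ℕ → Fin d → ℝ) :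
    deriv (Qpt n d ω W 0) = fun _ => 0 := by
  have hQ : ∀ t : ℝ, t ≠ 1 → Qpt n d ω W 0 t = W 0 := by
    intro t ht
    unfold Qpt
    simp only [Nat.zero_add, zero_add, Finset.sum_range_one]
    have hb : bern n 0 t ≠ 0 := by
      simp only [bern, Nat.choose_zero_right, Nat.cast_one, pow_zero, one_mul, Nat.sub_zero]
      exact pow_ne_zero _ (sub_ne_zero.mpr (Ne.symm ht))
    rw [smul_smul, inv_mul_cancel₀ (mul_ne_zero hω0 hb), one_smul]
  funext s
  rcases eq_or_ne s 1 with rfl | hs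
  · rcases eq_or_ne (W 0) 0 with hW | hW
    · have hzero : Qpt n d ω W 0 = fun _ => (0 : Fin d → ℝ) := by
        funext t; simp [Qpt, hW]
      rw [hzero]
      simp [deriv_const']
    · apply deriv_zero_of_not_differentiableAt
      intro hdiff
      have hv : Qpt n d ω W 0 1 = 0 := by
        unfold Qpt
        have : bern n 0 1 = 0 := by
          simp only [bern, Nat.choose_zero_right, Nat.cast_one, pow_zero, one_mul,
            Nat.sub_zero, sub_self]
          exact zero_pow (by omega)
        simp [Finset.sum_range_one, this]
      have h1 : Filter.Tendsto (Qpt n d ω W 0) (nhdsWithin 1 {(1:ℝ)}ᶜ) (nhds 0) := by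
        have := hdiff.continuousAt.continuousWithinAt (s := {(1:ℝ)}ᶜ)
        rwa [ContinuousWithinAt, hv] at this
      have h2 : Filter.Tendsto (Qpt n d ω W 0) (nhdsWithin 1 {(1:ℝ)}ᶜ) (nhds (W 0)) := by
        refine Filter.Tendsto.congr' ?_ tendsto_const_nhds
        exact Filter.eventually_mem_set.mpr self_mem_nhdsWithin |>.mono
          (fun t ht => (hQ t ht).symm)
      exact hW (tendsto_nhds_unique h2 h1)
  · have hev : Qpt n d ω W 0 =ᶠ[nhds s] fun _ => W 0 :=
      Filter.eventuallyEq_of_mem (isOpen_compl_singleton.mem_nhds hs) (fun t ht => hQ t ht)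
    rw [hev.deriv_eq]
    simp [deriv_const']

end Bezier

/-- general differential-recurrence relation for the `r`-th derivative of
`Q^n_i` (`r ≥ 1`), with `(Q^n_0)^{(k)} ≡ 0` for all `k ≥ 1`; consequently
`R_n^{(r)}(t) = (Q^n_n)^{(r)}(t)`. -/
theorem Qpt_higher_deriv_recurrence (n d : ℕ) (hn : 1 ≤ n) (hd : 1 ≤ d)
    (W : ℕ → Fin d → ℝ) (ω : ℕ → ℝ) (hω : ∀ k ≤ n, 0 < ω k) (r : ℕ) (hr : 1 ≤ r) :
    (∀ k, 1 ≤ k → ∀ s : ℝ, iteratedDeriv k (Qpt n d ω W 0) s = 0)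
    ∧ (∀ i, 1 ≤ i → i ≤ n → ∀ t : ℝ, 0 < t → t < 1 →
        iteratedDeriv r (Qpt n d ω W i) t =
          iteratedDeriv r (hfun n ω i) t • (W i - Qpt n d ω W (i - 1) t)
            + iteratedDeriv r (Qpt n d ω W (i - 1)) t
            - ∑ j ∈ range r, ((r.choose j : ℝ) * iteratedDeriv j (hfun n ω i) t) •
                iteratedDeriv (r - j) (Qpt n d ω W (i - 1)) t)
    ∧ (∀ t : ℝ, 0 < t → t < 1 →
        iteratedDeriv r (RB n d ω W) t = iteratedDeriv r (Qpt n d ω W n) t) := by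
  refine ⟨?_, ?_, fun t _ _ => rfl⟩
  · intro k hk s
    obtain ⟨k, rfl⟩ := Nat.exists_eq_add_of_le hk
    rw [add_comm, iteratedDeriv_succ', Qpt0_deriv n d hn ω (hω 0 (Nat.zero_le _)).ne' W,
      iteratedDeriv_zero_fun]
    rfl
  · intro i hi1 hin t ht0 ht1
    obtain ⟨m, rfl⟩ : ∃ m, i = m + 1 := ⟨i - 1, (Nat.succ_pred_eq_of_pos hi1).symm⟩
    simp only [Nat.add_sub_cancel]
    have hs : IsOpen (Set.Ioo (0:ℝ) 1) := isOpen_Ioo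
    have ht : t ∈ Set.Ioo (0:ℝ) 1 := ⟨ht0, ht1⟩
    have hm : m ≤ n := le_trans (Nat.le_succ m) hin
    have hQm := contDiffOn_Qpt n m d hm ω hω W
    have hh := contDiffOn_hfun n (m+1) hin ω hω
    set h := hfun n ω (m+1)
    set Q := Qpt n d ω W m
    have hu : ContDiffOn ℝ (⊤ : ℕ∞) (fun x => W (m+1) - Q x) (Set.Ioo 0 1) :=
      contDiffOn_const.sub hQm
    -- rewrite Qpt (m+1) as Q + h • u near t
    have hev : Qpt n d ω W (m+1) =ᶠ[nhds t]
        (fun x => Q x + h x • (W (m+1) - Q x)) :=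
      Filter.eventuallyEq_of_mem (hs.mem_nhds ht)
        (fun x hx => Qpt_rec n d ω hω W m hin hx.1 hx.2)
    rw [hev.iteratedDeriv_eq r]
    rw [iteratedDeriv_add_on hs hQm (g := fun x => h x • (W (m+1) - Q x)) ((hh.smul hu)) r t ht]
    rw [leibniz_smul hs hh hu r t ht]
    -- split off the j = r term
    rw [Finset.sum_range_succ]
    have hlast : iteratedDeriv (r - r) (fun x => W (m+1) - Q x) t = W (m+1) - Q t := by
      simp
    rw [hlast, Nat.choose_self, Nat.cast_one, one_smul]
    have hrest : ∀ j ∈ range r,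
        (r.choose j : ℝ) • (iteratedDeriv j h t • iteratedDeriv (r-j) (fun x => W (m+1) - Q x) t)
          = -(((r.choose j : ℝ) * iteratedDeriv j h t) • iteratedDeriv (r - j) Q t) := by
      intro j hj
      have hj1 : 1 ≤ r - j := by
        have := mem_range.mp hj; omega
      rw [iteratedDeriv_const_sub' _ hj1, smul_neg, smul_neg, smul_smul]
    rw [Finset.sum_congr rfl hrest, Finset.sum_neg_distrib]
    abel
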